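/- Let 𝔄 be a finite-dimensional associative algebra over ℂ and F ∈ 𝔄* a linear functional such that dim Stab_F(1) ≤ dim Stab_G(1) for all G ∈ 𝔄*. Then Stab_F(1) is a commutative subalgebra of 𝔄: for all x, y ∈ Stab_F(1), x y = y x (and x y ∈ Stab_F(1)). -/

import Mathlib

/-- `Stab_F(1) = {a : ∀ x, F(ax) = F(xa)}` -/
def stabOne {A : Type*} [NonUnitalRing A] [Module ℂ A]
    [SMulCommClass ℂ A A] [IsScalarTower ℂ A A]
    (F : Module.Dual ℂ A) : Submodule ℂ A where
  carrier := {a | ∀ x : A, F (a * x) = F (x * a)}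
  add_mem' := by
    intro a b ha hb x
    simp only [add_mul, mul_add, map_add, ha x, hb x]
  zero_mem' := by intro x; simp
  smul_mem' := by
    intro c a ha x
    simp only [smul_mul_assoc, mul_smul_comm, map_smul, ha x]

open Module Polynomial Matrix

section Aux

variable {A : Type*} [NonUnitalRing A] [Module ℂ A]
    [SMulCommClass ℂ A A] [IsScalarTower ℂ A A]

/-- The bilinear form `(a, z) ↦ G (a*z - z*a)`. -/
noncomputable def phiB (G : Module.Dual ℂ A) : A →ₗ[ℂ] A →ₗ[ℂ] ℂ :=
  LinearMap.mk₂ ℂ (fun a z => G (a * z - z * a))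
    (fun a b z => by
      rw [add_mul, mul_add,
        show a*z + b*z - (z*a + z*b) = (a*z - z*a) + (b*z - z*b) by abel, map_add])
    (fun c a z => by
      rw [smul_mul_assoc, mul_smul_comm, ← smul_sub, _root_.map_smul])
    (fun a z w => by
      rw [mul_add, add_mul,
        show a*z + a*w - (z*a + w*a) = (a*z - z*a) + (a*w - w*a) by abel, map_add])
    (fun c a z => by
      rw [mul_smul_comm, smul_mul_assoc, ← smul_sub, _root_.map_smul])

lemma phiB_apply (G : Module.Dual ℂ A) (a z : A) : phiB G a z = G (a*z - z*a) := rfl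

lemma mem_stabOne_iff {G : Module.Dual ℂ A} {a : A} :
    a ∈ stabOne G ↔ ∀ z, phiB G a z = 0 := by
  show (∀ z : A, G (a * z) = G (z * a)) ↔ _
  simp only [phiB_apply, map_sub, sub_eq_zero]

lemma phiB_skew (G : Module.Dual ℂ A) (a z : A) : phiB G a z = - phiB G z a := by
  simp only [phiB_apply, ← map_neg, neg_sub]

lemma phiB_self (G : Module.Dual ℂ A) (a : A) : phiB G a a = 0 := by
  simp [phiB_apply]

lemma phiB_right_eq_zero {G : Module.Dual ℂ A} {a : A} (ha : a ∈ stabOne G) (z : A) :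
    phiB G z a = 0 := by
  rw [phiB_skew, mem_stabOne_iff.mp ha z, neg_zero]

lemma phiB_add_smul (F G : Module.Dual ℂ A) (c : ℂ) (a z : A) :
    phiB (F + c • G) a z = phiB F a z + c * phiB G a z := by
  simp [phiB_apply, smul_eq_mul]

/-- Key step (Duflo–Vergne): if `F` has minimal stabilizer, then every functional kills
commutators of elements of `stabOne F`. -/
lemma key [FiniteDimensional ℂ A] (F : Module.Dual ℂ A)
    (hmin : ∀ G : Module.Dual ℂ A,
      Module.finrank ℂ ↥(stabOne F) ≤ Module.finrank ℂ ↥(stabOne G))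
    {x y : A} (hx : x ∈ stabOne F) (hy : y ∈ stabOne F) (G : Module.Dual ℂ A) :
    phiB G x y = 0 := by
  by_contra hγ
  obtain ⟨W, hW⟩ := Submodule.exists_isCompl (stabOne F)
  set d := Module.finrank ℂ ↥(stabOne F) with hd
  set m := Module.finrank ℂ ↥W with hm
  let bW : Basis (Fin m) ℂ ↥W := Module.finBasis ℂ ↥W
  -- the family of vectors
  let v : Fin m ⊕ Fin 2 → A := Sum.elim (fun i => (bW i : A)) ![x, y]
  have hmemxy : ∀ k : Fin 2, ![x, y] k ∈ stabOne F := by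
    intro k; fin_cases k <;> assumption
  -- linear independence
  have hvW : LinearIndependent ℂ (fun i => (bW i : A)) := by
    have := bW.linearIndependent.map' W.subtype (Submodule.ker_subtype W)
    exact this
  have hspanW : Submodule.span ℂ (Set.range fun i => (bW i : A)) = W := by
    calc Submodule.span ℂ (Set.range fun i => (bW i : A))
        = Submodule.map W.subtype (Submodule.span ℂ (Set.range bW)) := by
          rw [Submodule.map_span, ← Set.range_comp]; rfl
      _ = W := by rw [bW.span_eq, Submodule.map_subtype_top]
  have hxy2 : LinearIndependent ℂ ![x, y] := by
    rw [LinearIndependent.pair_iff]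
    intro s t hst
    have h1 : s * phiB G x y = 0 := by
      have h := congrArg (fun a => phiB G a y) hst
      simpa [map_add, _root_.map_smul, phiB_self, smul_eq_mul] using h
    have hs : s = 0 := by
      rcases mul_eq_zero.mp h1 with h | h
      · exact h
      · exact absurd h hγ
    have h2 : t * phiB G x y = 0 := by
      have h := congrArg (fun a => phiB G x a) hst
      simpa [map_add, _root_.map_smul, phiB_self, smul_eq_mul] using h
    have ht : t = 0 := by
      rcases mul_eq_zero.mp h2 with h | h
      · exact h
      · exact absurd h hγ
    exact ⟨hs, ht⟩
  have hspanxy : Submodule.span ℂ (Set.range ![x, y]) ≤ stabOne F := by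
    rw [Submodule.span_le]
    rintro a ⟨k, rfl⟩
    exact hmemxy k
  have hdisj : Disjoint (Submodule.span ℂ (Set.range fun i => (bW i : A)))
      (Submodule.span ℂ (Set.range ![x, y])) := by
    rw [hspanW]
    exact (hW.disjoint.symm).mono_right hspanxy
  have hv : LinearIndependent ℂ v := hvW.sum_type hxy2 hdisj
  classical
  -- matrices of the forms in the family `v`
  let MB : Matrix (Fin m ⊕ Fin 2) (Fin m ⊕ Fin 2) ℂ :=
    Matrix.of fun i j => phiB F (v i) (v j)
  let MC : Matrix (Fin m ⊕ Fin 2) (Fin m ⊕ Fin 2) ℂ :=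
    Matrix.of fun i j => phiB G (v i) (v j)
  have hBr : ∀ (i : Fin m ⊕ Fin 2) (k : Fin 2), MB i (Sum.inr k) = 0 := fun i k =>
    phiB_right_eq_zero (hmemxy k) (v i)
  have hBl : ∀ (k : Fin 2) (j : Fin m ⊕ Fin 2), MB (Sum.inr k) j = 0 := fun k j =>
    mem_stabOne_iff.mp (hmemxy k) (v j)
  -- the polynomial matrix (with the last two columns divided by `t`)
  let Mp : Matrix (Fin m ⊕ Fin 2) (Fin m ⊕ Fin 2) ℂ[X] :=
    Matrix.of fun i j =>
      match j with
      | Sum.inl _ => Polynomial.C (MB i j) + Polynomial.X * Polynomial.C (MC i j)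
      | Sum.inr _ => Polynomial.C (MC i j)
  let B1 : Matrix (Fin m) (Fin m) ℂ := Matrix.of fun i j => phiB F (bW i : A) (bW j : A)
  let C2 : Matrix (Fin m) (Fin 2) ℂ := Matrix.of fun i k => phiB G (bW i : A) (![x, y] k)
  let J : Matrix (Fin 2) (Fin 2) ℂ := Matrix.of fun k l => phiB G (![x, y] k) (![x, y] l)
  have hMp0 : Mp.map (Polynomial.eval 0) = Matrix.fromBlocks B1 C2 0 J := by
    ext i j
    rcases i with i | i <;> rcases j with j | j
    · simp [Mp, MB, MC, B1, v]
    · simp [Mp, MC, C2, v]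
    · simp only [Matrix.map_apply, Matrix.of_apply, Mp, Polynomial.eval_add,
        Polynomial.eval_mul, Polynomial.eval_X, Polynomial.eval_C, zero_mul, add_zero,
        Matrix.fromBlocks_apply₂₁, Matrix.zero_apply]
      exact hBl i (Sum.inl j)
    · simp [Mp, MC, J, v]
  have hdetJ : J.det = phiB G x y * phiB G x y := by
    rw [Matrix.det_fin_two]
    have h10 : phiB G y x = - phiB G x y := phiB_skew G y x
    simp only [J, Matrix.of_apply]
    show phiB G (![x, y] 0) (![x, y] 0) * phiB G (![x, y] 1) (![x, y] 1) -
        phiB G (![x, y] 0) (![x, y] 1) * phiB G (![x, y] 1) (![x, y] 0) = _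
    simp only [Matrix.cons_val_zero, Matrix.cons_val_one, Matrix.head_cons, phiB_self, h10]
    ring
  have hdetB1 : B1.det ≠ 0 := by
    intro h0
    obtain ⟨a, ha0, haM⟩ := Matrix.exists_vecMul_eq_zero_iff.mpr h0
    set w : A := ∑ i, a i • (bW i : A) with hwdef
    have hwW : w ∈ W := Submodule.sum_mem _ (fun i _ => Submodule.smul_mem _ _ (bW i).2)
    have hwB : ∀ j, phiB F w (bW j : A) = 0 := by
      intro j
      have h1 : phiB F w (bW j : A) = ∑ i, a i * B1 i j := by
        rw [hwdef, map_sum]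
        simp [B1]
      rw [h1]
      have h2 := congrFun haM j
      simpa [Matrix.vecMul, dotProduct] using h2
    have hwstab : w ∈ stabOne F := by
      rw [mem_stabOne_iff]
      intro z
      obtain ⟨p, hp, q, hq, rfl⟩ := Submodule.mem_sup.mp
        (show z ∈ stabOne F ⊔ W by rw [hW.sup_eq_top]; trivial)
      rw [map_add]
      have h1 : phiB F w p = 0 := phiB_right_eq_zero hp w
      have h2 : phiB F w q = 0 := by
        have hq' : q ∈ Submodule.span ℂ (Set.range fun i => (bW i : A)) := by
          rw [hspanW]; exact hq
        obtain ⟨cc, rfl⟩ := (Submodule.mem_span_range_iff_exists_fun ℂ).mp hq'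
        rw [map_sum]
        simp [hwB]
      rw [h1, h2, add_zero]
    have hw0 : w = 0 := Submodule.disjoint_def.mp hW.disjoint w hwstab hwW
    have := Fintype.linearIndependent_iff.mp hvW a (by rw [← hwdef]; exact hw0)
    exact ha0 (funext fun i => this i)
  have hmapdet0 : Polynomial.eval 0 Mp.det = (Mp.map (Polynomial.eval 0)).det := by
    have h := RingHom.map_det (Polynomial.evalRingHom 0) Mp
    simpa using h
  have hMp0det : Polynomial.eval 0 Mp.det ≠ 0 := by
    rw [hmapdet0, hMp0, Matrix.det_fromBlocks_zero₂₁, hdetJ]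
    exact mul_ne_zero hdetB1 (mul_ne_zero hγ hγ)
  have hPne : Mp.det ≠ 0 := fun h => by simp [h] at hMp0det
  obtain ⟨c, hc⟩ : ∃ c : ℂ, (Polynomial.X * Mp.det).eval c ≠ 0 := by
    by_contra h
    push_neg at h
    exact mul_ne_zero Polynomial.X_ne_zero hPne (Polynomial.zero_of_eval_zero _ h)
  rw [Polynomial.eval_mul, Polynomial.eval_X] at hc
  have hc0 : c ≠ 0 := fun h => hc (by simp [h])
  have hPc : Polynomial.eval c Mp.det ≠ 0 := fun h => hc (by simp [h])
  -- the deformed functional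
  set G' : Module.Dual ℂ A := F + c • G with hG'def
  let M : Matrix (Fin m ⊕ Fin 2) (Fin m ⊕ Fin 2) ℂ :=
    Matrix.of fun i j => phiB G' (v i) (v j)
  have hMfact : M = (Mp.map (Polynomial.eval c)) *
      Matrix.diagonal (Sum.elim (fun _ : Fin m => (1 : ℂ)) (fun _ : Fin 2 => c)) := by
    ext i j
    rw [Matrix.mul_diagonal]
    rcases j with j | j
    · show phiB G' (v i) (v (Sum.inl j)) = Polynomial.eval c
        (Polynomial.C (MB i (Sum.inl j)) + Polynomial.X * Polynomial.C (MC i (Sum.inl j))) * 1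
      rw [hG'def, phiB_add_smul, mul_one, Polynomial.eval_add, Polynomial.eval_mul,
        Polynomial.eval_X, Polynomial.eval_C, Polynomial.eval_C]
      rfl
    · show phiB G' (v i) (v (Sum.inr j)) = Polynomial.eval c
        (Polynomial.C (MC i (Sum.inr j))) * c
      rw [hG'def, phiB_add_smul, Polynomial.eval_C]
      rw [show phiB F (v i) (v (Sum.inr j)) = 0 from hBr i j, zero_add, mul_comm]
      rfl
  have hmapdetc : (Mp.map (Polynomial.eval c)).det = Polynomial.eval c Mp.det := by
    have h := RingHom.map_det (Polynomial.evalRingHom c) Mp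
    simpa using h.symm
  have hdetM : M.det ≠ 0 := by
    rw [hMfact, Matrix.det_mul, Matrix.det_diagonal, hmapdetc]
    have hprod : (∏ i : Fin m ⊕ Fin 2,
        Sum.elim (fun _ : Fin m => (1 : ℂ)) (fun _ : Fin 2 => c) i) = c * c := by
      rw [Fintype.prod_sum_type]
      simp [Fin.prod_univ_two, pow_two]
    rw [hprod]
    exact mul_ne_zero hPc (mul_ne_zero hc0 hc0)
  have hdisjT : Disjoint (stabOne G') (Submodule.span ℂ (Set.range v)) := by
    rw [Submodule.disjoint_def]
    intro u hu1 hu2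
    obtain ⟨a, ha⟩ := (Submodule.mem_span_range_iff_exists_fun ℂ).mp hu2
    have haM : a ᵥ* M = 0 := by
      funext j
      have h1 : phiB G' u (v j) = 0 := mem_stabOne_iff.mp hu1 (v j)
      rw [← ha, map_sum] at h1
      simp only [LinearMap.sum_apply, _root_.map_smul, LinearMap.smul_apply, smul_eq_mul] at h1
      simpa [Matrix.vecMul, dotProduct, M] using h1
    have ha0 : a = 0 := by
      by_contra h
      exact hdetM (Matrix.exists_vecMul_eq_zero_iff.mp ⟨a, h, haM⟩)
    rw [← ha, ha0]
    simp
  have hfr := Submodule.finrank_add_finrank_le_of_disjoint hdisjT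
  have hspanv : Module.finrank ℂ (Submodule.span ℂ (Set.range v)) = m + 2 := by
    rw [finrank_span_eq_card hv]
    simp
  have hcompl := Submodule.finrank_add_eq_of_isCompl hW
  have hmin' := hmin G'
  rw [hspanv] at hfr
  have h1 : d + m = Module.finrank ℂ A := by rw [hd, hm]; exact hcompl
  omega

end Aux

theorem stmt11 {A : Type*} [NonUnitalRing A] [Module ℂ A]
    [SMulCommClass ℂ A A] [IsScalarTower ℂ A A] [FiniteDimensional ℂ A]
    (F : Module.Dual ℂ A)
    (hmin : ∀ G : Module.Dual ℂ A,
      Module.finrank ℂ ↥(stabOne F) ≤ Module.finrank ℂ ↥(stabOne G)) :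
    ∀ x ∈ stabOne F, ∀ y ∈ stabOne F, x * y = y * x ∧ x * y ∈ stabOne F := by
  intro x hx y hy
  constructor
  · have h0 : ∀ G : Module.Dual ℂ A, G (x*y - y*x) = 0 := fun G => key F hmin hx hy G
    have := (Module.forall_dual_apply_eq_zero_iff ℂ (x*y - y*x)).mp h0
    exact sub_eq_zero.mp this
  · intro z
    have hxz : F (x * y * z) = F (y * (z * x)) := by
      rw [mul_assoc, hx (y * z), mul_assoc]
    have hyz : F (y * (z * x)) = F (z * (x * y)) := by
      rw [hy (z * x), mul_assoc, ← mul_assoc]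
    rw [hxz, hyz]
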